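/- Let f: Γ → Σ and g: Γ' → Σ be bundle scenarios and let α̃: NΓ → NΓ' be a map of simplicial sets with Ng ∘ α̃ = Nf. Then there exists a unique simplicial complex map α: Γ → Γ' such that g ∘ α = f and Nα = α̃. -/

import Mathlib

universe u v w t

namespace Ctx

/-- An abstract simplicial complex on the vertex type `V`: a collection of
nonempty finite subsets of `V` (the simplices/faces), closed under passing to
nonempty subsets, and containing every singleton (so that `V` is exactly the
vertex set). -/
structure SComplex (V : Type u) where
  faces : Set (Set V)
  finite_mem : ∀ σ ∈ faces, Set.Finite σ
  nonempty_mem : ∀ σ ∈ faces, Set.Nonempty σ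
  down_closed : ∀ ⦃σ⦄, σ ∈ faces → ∀ ⦃τ⦄, τ ⊆ σ → τ.Nonempty → τ ∈ faces
  singleton_mem : ∀ x : V, {x} ∈ faces

namespace SComplex

variable {V : Type u} {W : Type v} {V' : Type w} {V'' : Type t}

/-- A map of simplicial complexes: a function on vertices carrying every
simplex (elementwise image) to a simplex. -/
@[ext]
structure Map (Γ : SComplex V) (K : SComplex W) where
  toFun : V → W
  map_faces : ∀ ⦃σ⦄, σ ∈ Γ.faces → toFun '' σ ∈ K.faces

variable {Γ : SComplex V} {K : SComplex W} {K' : SComplex V'}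

/-- The identity simplicial complex map. -/
protected def Map.id (K : SComplex V) : Map K K :=
  ⟨fun x => x, fun σ h => by simpa using h⟩

/-- Composition of simplicial complex maps. -/
def Map.comp {L : SComplex V'} (g : Map K L) (f : Map Γ K) : Map Γ L :=
  ⟨g.toFun ∘ f.toFun, fun σ h => by
    rw [Set.image_comp]; exact g.map_faces (f.map_faces h)⟩

/-- The star of a simplex: all simplices containing it. -/
def star (K : SComplex V) (σ : Set V) : Set (Set V) := {τ | τ ∈ K.faces ∧ σ ⊆ τ}

/-- Surjectivity: every simplex of the target is an image of a simplex. -/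
def Map.Surj (f : Map Γ K) : Prop := ∀ σ ∈ K.faces, ∃ γ ∈ Γ.faces, f.toFun '' γ = σ

/-- Local surjectivity: stars surject onto stars. -/
def Map.LocSurj (f : Map Γ K) : Prop :=
  ∀ γ ∈ Γ.faces, ∀ τ ∈ K.star (f.toFun '' γ), ∃ γ' ∈ Γ.star γ, f.toFun '' γ' = τ

/-- Discreteness over vertices: no edge between distinct vertices with the
same image. -/
def Map.DiscV (f : Map Γ K) : Prop :=
  ∀ x y : V, x ≠ y → f.toFun x = f.toFun y → ({x, y} : Set V) ∉ Γ.faces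

/-- A bundle scenario: a surjective, locally surjective simplicial complex map
that is discrete over vertices. -/
def Map.IsBundle (f : Map Γ K) : Prop := f.Surj ∧ f.LocSurj ∧ f.DiscV

/-- `f` has the right lifting property with respect to `g`. -/
def RLP {A : Type*} {B : Type*} {CA : SComplex A} {CB : SComplex B}
    (g : Map CA CB) (f : Map Γ K) : Prop :=
  ∀ (u : Map CA Γ) (v : Map CB K), f.comp u = v.comp g →
    ∃ h : Map CB Γ, h.comp g = u ∧ f.comp h = v

/-- The full simplicial complex `Δ^n` on `{0, …, n}`. -/
def deltaC (n : ℕ) : SComplex (Fin (n + 1)) where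
  faces := {σ | σ.Nonempty}
  finite_mem := fun σ _ => σ.toFinite
  nonempty_mem := fun _ h => h
  down_closed := fun _ _ _ _ h => h
  singleton_mem := fun x => Set.singleton_nonempty x

/-- The simplicial complex map `Δ^m → Δ^n` induced by a function
`{0,…,m} → {0,…,n}`. -/
def deltaMap {m n : ℕ} (θ : Fin (m + 1) → Fin (n + 1)) : Map (deltaC m) (deltaC n) :=
  ⟨θ, fun _ h => h.image θ⟩

/-- The empty simplicial complex. -/
def emptyC : SComplex Empty where
  faces := ∅
  finite_mem := fun _ h => h.elim
  nonempty_mem := fun _ h => h.elim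
  down_closed := fun _ h => h.elim
  singleton_mem := fun x => x.elim

/-- The inclusion of the empty simplicial complex into `Δ^n`. -/
def emptyToDelta (n : ℕ) : Map emptyC (deltaC n) :=
  ⟨fun x => x.elim, fun _ h => h.elim⟩

/-- The type of faces of a simplicial complex. -/
abbrev Face (K : SComplex V) : Type u := {σ : Set V // σ ∈ K.faces}

/-- The nerve complex `ĤN K`: vertices are the simplices of `K`, and a
nonempty finite set of simplices is a face iff its union is a face of `K`. -/
def nerveC (K : SComplex V) : SComplex K.Face where
  faces := {τ | τ.Finite ∧ τ.Nonempty ∧ (⋃ σ ∈ τ, (σ : Set V)) ∈ K.faces}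
  finite_mem := fun _ h => h.1
  nonempty_mem := fun _ h => h.2.1
  down_closed := by
    intro τ h τ' hsub hne
    refine ⟨h.1.subset hsub, hne, K.down_closed h.2.2 ?_ ?_⟩
    · exact Set.biUnion_subset_biUnion_left hsub
    · obtain ⟨σ, hσ⟩ := hne
      obtain ⟨x, hx⟩ := K.nonempty_mem σ.1 σ.2
      exact ⟨x, Set.mem_biUnion hσ hx⟩
  singleton_mem := fun σ => ⟨Set.finite_singleton σ, Set.singleton_nonempty σ, by
    simpa using σ.2⟩

/-- The map `ĤN f` induced on nerve complexes. -/
def nerveMap (f : Map Γ K) : Map (nerveC Γ) (nerveC K) where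
  toFun γ := ⟨f.toFun '' γ.1, f.map_faces γ.2⟩
  map_faces := by
    intro τ hτ
    refine ⟨hτ.1.image _, hτ.2.1.image _, ?_⟩
    have h : (⋃ σ ∈ (fun γ : Γ.Face => (⟨f.toFun '' γ.1, f.map_faces γ.2⟩ : K.Face)) '' τ,
        (σ : Set W)) = f.toFun '' (⋃ σ ∈ τ, (σ : Set V)) := by
      rw [Set.biUnion_image, Set.image_iUnion₂]
    exact Set.mem_of_eq_of_mem h (f.map_faces hτ.2.2)

/-- The unit `δ : K → ĤN K`, sending a vertex to the singleton simplex. -/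
def deltaHat (K : SComplex V) : Map K (nerveC K) where
  toFun x := ⟨{x}, K.singleton_mem x⟩
  map_faces := by
    intro σ hσ
    refine ⟨(K.finite_mem σ hσ).image _, (K.nonempty_mem σ hσ).image _, ?_⟩
    have h : (⋃ τ ∈ (fun x : V => (⟨{x}, K.singleton_mem x⟩ : K.Face)) '' σ,
        (τ : Set V)) = σ := by
      rw [Set.biUnion_image]
      exact Set.biUnion_of_singleton σ
    exact Set.mem_of_eq_of_mem h hσ

/-- The multiplication `μ : ĤN (ĤN K) → ĤN K` of the nerve complex monad,
sending a set of simplices to its union. -/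
def muMap (K : SComplex V) : Map (nerveC (nerveC K)) (nerveC K) where
  toFun τ := ⟨⋃ σ ∈ τ.1, (σ : Set V), τ.2.2.2⟩
  map_faces := by
    intro T hT
    refine ⟨hT.1.image _, hT.2.1.image _, ?_⟩
    have h : (⋃ σ ∈ (fun τ : (nerveC K).Face =>
          (⟨⋃ σ ∈ τ.1, (σ : Set V), τ.2.2.2⟩ : K.Face)) '' T, (σ : Set V))
        = ⋃ σ ∈ (⋃ τ ∈ T, (τ : Set K.Face)), (σ : Set V) := by
      rw [Set.biUnion_image]
      ext x
      simp only [Set.mem_iUnion, Set.mem_setOf_eq]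
      tauto
    exact Set.mem_of_eq_of_mem h hT.2.2.2.2

/-- The vertex type of the pull-back of `f : Γ → K` along `π : K' → K`. -/
def PB {Γ : SComplex V} {K : SComplex W} {K' : SComplex V'} (f : Map Γ K) (π : Map K' K) :
    Type (max u w) :=
  {q : V × V' // f.toFun q.1 = π.toFun q.2}

/-- The pull-back of `f : Γ → K` along `π : K' → K`: vertices are pairs
`(x, y)` with `f x = π y`, and a set of pairs is a simplex iff both coordinate
projections are simplices. -/
def pullback {Γ : SComplex V} {K : SComplex W} {K' : SComplex V'} (f : Map Γ K) (π : Map K' K) :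
    SComplex (PB f π) where
  faces := {τ | ((fun q : PB f π => q.1.1) '' τ) ∈ Γ.faces ∧
    ((fun q : PB f π => q.1.2) '' τ) ∈ K'.faces}
  finite_mem := by
    intro τ h
    have h1 : (Subtype.val '' τ).Finite := by
      refine Set.Finite.subset (Set.Finite.prod (Γ.finite_mem _ h.1) (K'.finite_mem _ h.2)) ?_
      rintro q ⟨r, hr, rfl⟩
      exact ⟨⟨r, hr, rfl⟩, ⟨r, hr, rfl⟩⟩
    exact Set.Finite.of_finite_image h1 Subtype.val_injective.injOn
  nonempty_mem := fun τ h => Set.Nonempty.of_image (Γ.nonempty_mem _ h.1)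
  down_closed := fun τ h τ' hsub hne =>
    ⟨Γ.down_closed h.1 (Set.image_mono hsub) (hne.image _),
     K'.down_closed h.2 (Set.image_mono hsub) (hne.image _)⟩
  singleton_mem := fun q => by
    constructor
    · simpa using Γ.singleton_mem q.1.1
    · simpa using K'.singleton_mem q.1.2

/-- First projection of the pull-back. -/
def pbFst {Γ : SComplex V} {K : SComplex W} {K' : SComplex V'} (f : Map Γ K) (π : Map K' K) :
    Map (pullback f π) Γ :=
  ⟨fun q => q.1.1, fun _ h => h.1⟩

/-- Second projection of the pull-back (the pulled-back bundle). -/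
def pbSnd {Γ : SComplex V} {K : SComplex W} {K' : SComplex V'} (f : Map Γ K) (π : Map K' K) :
    Map (pullback f π) K' :=
  ⟨fun q => q.1.2, fun _ h => h.2⟩

/-- The event complex `E_O K` of a scenario `(K, O)`: vertices are pairs
`(x, o)` with `o ∈ O x`, and simplices are graphs of outcome assignments over
simplices of `K`. -/
def eventComplex (K : SComplex V) (O : V → Type v) : SComplex ((x : V) × O x) where
  faces := {τ | (Sigma.fst '' τ) ∈ K.faces ∧ Set.InjOn Sigma.fst τ}
  finite_mem := fun _ h => Set.Finite.of_finite_image (K.finite_mem _ h.1) h.2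
  nonempty_mem := fun _ h => Set.Nonempty.of_image (K.nonempty_mem _ h.1)
  down_closed := fun τ h τ' hsub hne =>
    ⟨K.down_closed h.1 (Set.image_mono hsub) (hne.image _), h.2.mono hsub⟩
  singleton_mem := fun p => ⟨by simpa using K.singleton_mem p.1, Set.injOn_singleton _ _⟩

/-- The canonical projection `E_O K → K` of a scenario. -/
def eventProj (K : SComplex V) (O : V → Type v) : Map (eventComplex K O) K :=
  ⟨Sigma.fst, fun _ h => h.1⟩

end SComplex

open SComplex

/-- `R`-distributions on a set `U`: finitely supported `R`-valued functions
summing to `1`. -/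
def Dist (R : Type u) [CommSemiring R] (U : Type v) : Type (max u v) :=
  {p : U →₀ R // p.sum (fun _ r => r) = 1}

/-- Push-forward of distributions along a function. -/
noncomputable def Dist.map {R : Type u} [CommSemiring R] {U : Type v} {U' : Type w} (g : U → U')
    (p : Dist R U) : Dist R U' :=
  ⟨Finsupp.mapDomain g p.1, by
    rw [Finsupp.sum_mapDomain_index (fun _ => rfl) (fun _ _ _ => rfl)]
    exact p.2⟩

/-- The Dirac distribution at a point. -/
noncomputable def Dist.pure {R : Type u} [CommSemiring R] {U : Type v} (u : U) : Dist R U :=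
  ⟨Finsupp.single u 1, by rw [Finsupp.sum_single_index rfl]⟩

namespace SComplex

/-- The fiber of a simplicial complex map over a simplex of the target. -/
abbrev Map.fiber {Γ : SComplex V} {K : SComplex W} (f : Map Γ K) (σ : Set W) : Type u :=
  {γ : Set V // γ ∈ Γ.faces ∧ f.toFun '' γ = σ}

/-- The restriction map between fibers, sending `γ` over `σ` to the
subsimplex of `γ` lying over `σ' ⊆ σ`.  (For bundle scenarios this is the
unique such subsimplex.) -/
def Map.resFiber {Γ : SComplex V} {K : SComplex W} (f : Map Γ K) {σ σ' : Set W}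
    (hσ' : σ' ∈ K.faces) (h : σ' ⊆ σ) (γ : f.fiber σ) : f.fiber σ' := by
  have hne : ({y | y ∈ γ.1 ∧ f.toFun y ∈ σ'} : Set V).Nonempty := by
    obtain ⟨x, hx⟩ := K.nonempty_mem σ' hσ'
    have hx' : x ∈ f.toFun '' γ.1 := (Set.ext_iff.mp γ.2.2 x).mpr (h hx)
    obtain ⟨y, hy, rfl⟩ := hx'
    exact ⟨y, hy, hx⟩
  refine ⟨{y | y ∈ γ.1 ∧ f.toFun y ∈ σ'},
    Γ.down_closed γ.2.1 (fun y hy => hy.1) hne, ?_⟩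
  ext x
  constructor
  · rintro ⟨y, ⟨hy, hfy⟩, rfl⟩
    exact hfy
  · intro hx
    have hx' : x ∈ f.toFun '' γ.1 := (Set.ext_iff.mp γ.2.2 x).mpr (h hx)
    obtain ⟨y, hy, rfl⟩ := hx'
    exact ⟨y, ⟨hy, hx⟩, rfl⟩

/-- An empirical model on a bundle scenario `f : Γ → K`: a compatible family
of distributions on the fibers of `f`. -/
structure EmpiricalModel (R : Type t) [CommSemiring R] {Γ : SComplex V} {K : SComplex W}
    (f : Map Γ K) where
  dist : ∀ σ, σ ∈ K.faces → Dist R (f.fiber σ)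
  compat : ∀ σ (hσ : σ ∈ K.faces) σ' (hσ' : σ' ∈ K.faces) (h : σ' ⊆ σ),
    Dist.map (f.resFiber hσ' h) (dist σ hσ) = dist σ' hσ'

/-- An empirical model on a scenario `(K, O)`: a compatible family of
distributions on joint outcome assignments over each measurement context. -/
structure ScenEmp (R : Type t) [CommSemiring R] (K : SComplex V) (O : V → Type v) where
  dist : ∀ σ, σ ∈ K.faces → Dist R (∀ x : σ, O x.1)
  compat : ∀ σ (hσ : σ ∈ K.faces) σ' (hσ' : σ' ∈ K.faces) (h : σ' ⊆ σ),
    Dist.map (fun (s : ∀ x : σ, O x.1) (x : σ') => s ⟨x.1, h x.2⟩) (dist σ hσ) = dist σ' hσ'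

end SComplex

namespace SComplex

variable {V : Type u} {W : Type v} {V' : Type w}


/-- The defining property of the push-forward `π_* p` of an empirical model
`p` on `f` along a simplicial relation `π : K' → ĤN K` (a simplicial complex
map into the nerve complex): over a simplex `σ'` of `K'`, the value at a fiber
element `γ'` of the pulled-back bundle is the value of `p` over the union
`π̄(σ')` at the union of the first components of `γ'`. -/
def piPushSpec {Γ : SComplex V} {K : SComplex W} {K' : SComplex V'}
    (f : Map Γ K) (π : Map K' (nerveC K)) {R : Type t} [CommSemiring R]
    (p : EmpiricalModel R f) (q : EmpiricalModel R (pbSnd (nerveMap f) π)) : Prop :=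
  ∀ σ' (hσ' : σ' ∈ K'.faces) (γ' : (pbSnd (nerveMap f) π).fiber σ')
    (hu : (⋃ x' ∈ σ', ((π.toFun x' : K.Face) : Set W)) ∈ K.faces)
    (γ : f.fiber (⋃ x' ∈ σ', ((π.toFun x' : K.Face) : Set W))),
    (γ : Set V) = (⋃ r ∈ γ'.1, ((r.1.1 : Γ.Face) : Set V)) →
    (q.dist σ' hσ').1 γ' = (p.dist _ hu).1 γ

/-- The fiber element of the event bundle given by the graph of an outcome
assignment `s` over a simplex `σ`. -/
def graphFiber (K : SComplex V) (O : V → Type v) {σ : Set V} (hσ : σ ∈ K.faces)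
    (s : ∀ x : σ, O x.1) : (eventProj K O).fiber σ := by
  refine ⟨{p : (x : V) × O x | ∃ h : p.1 ∈ σ, p.2 = s ⟨p.1, h⟩}, ⟨?_, ?_⟩, ?_⟩
  · have h : Sigma.fst '' {p : (x : V) × O x | ∃ h : p.1 ∈ σ, p.2 = s ⟨p.1, h⟩} = σ := by
      ext x
      constructor
      · rintro ⟨p, ⟨hp, _⟩, rfl⟩; exact hp
      · intro hx; exact ⟨⟨x, s ⟨x, hx⟩⟩, ⟨hx, rfl⟩, rfl⟩
    exact Set.mem_of_eq_of_mem h hσ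
  · rintro ⟨x₁, o₁⟩ ⟨h₁, ho₁⟩ ⟨x₂, o₂⟩ ⟨h₂, ho₂⟩ hx
    obtain rfl : x₁ = x₂ := hx
    exact congrArg (Sigma.mk x₁) (ho₁.trans ho₂.symm)
  · ext x
    constructor
    · rintro ⟨p, ⟨hp, _⟩, rfl⟩; exact hp
    · intro hx; exact ⟨⟨x, s ⟨x, hx⟩⟩, ⟨hx, rfl⟩, rfl⟩

/-- Push-forward of a fiber element along a map over the base. -/
def pushFiber {Γ : SComplex V} {Γ' : SComplex V'} {K : SComplex W}
    (f : Map Γ K) (g : Map Γ' K) (α : Map Γ Γ') (hc : g.comp α = f) (σ : Set W)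
    (γ : f.fiber σ) : g.fiber σ := by
  refine ⟨α.toFun '' γ.1, α.map_faces γ.2.1, ?_⟩
  rw [← Set.image_comp]
  have h : g.toFun ∘ α.toFun = f.toFun := congrArg Map.toFun hc
  rw [h]
  exact γ.2.2

/-- Sections of a bundle scenario. -/
def BSection {Γ : SComplex V} {K : SComplex W} (f : Map Γ K) : Type _ :=
  {s : Map K Γ // f.comp s = Map.id K}

/-- Evaluation of a section of a bundle scenario at a simplex of the base,
giving an element of the fiber. -/
def BSection.ev {Γ : SComplex V} {K : SComplex W} (f : Map Γ K) (σ : Set W)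
    (hσ : σ ∈ K.faces) (s : BSection f) : f.fiber σ := by
  refine ⟨s.1.toFun '' σ, s.1.map_faces hσ, ?_⟩
  rw [← Set.image_comp]
  have h : f.toFun ∘ s.1.toFun = fun x => x := congrArg Map.toFun s.2
  rw [h, Set.image_id']

/-- Noncontextuality of an empirical model on a bundle scenario: it is a
mixture of deterministic models coming from sections. -/
def BundleNC (R : Type t) [CommSemiring R] {Γ : SComplex V} {K : SComplex W}
    (f : Map Γ K) (p : EmpiricalModel R f) : Prop :=
  ∃ d : Dist R (BSection f), ∀ σ (hσ : σ ∈ K.faces),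
    p.dist σ hσ = Dist.map (BSection.ev f σ hσ) d

/-- Noncontextuality of an empirical model on a scenario `(K, O)`: it is a
mixture of deterministic models coming from global outcome assignments. -/
def ScenNC (R : Type t) [CommSemiring R] (K : SComplex V) (O : V → Type v)
    (e : ScenEmp R K O) : Prop :=
  ∃ d : Dist R (∀ x : V, O x), ∀ σ (hσ : σ ∈ K.faces),
    e.dist σ hσ = Dist.map (fun (g : ∀ x : V, O x) (x : σ) => g x.1) d

end SComplex

end Ctx
namespace Ctx

open CategoryTheory SComplex

/-! ### Simplicial sets: the nerve space of a simplicial complex -/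

/-- The commutative monoid of subsets of `V` under union (with unit `∅`). -/
def UM (V : Type u) : Type u := Set V

namespace UM

/-- View an element of the union monoid as a set. -/
def toSet {V : Type u} (a : UM V) : Set V := a

/-- View a set as an element of the union monoid. -/
def ofSet {V : Type u} (a : Set V) : UM V := a

end UM

instance {V : Type u} : Monoid (UM V) where
  mul a b := UM.ofSet (a.toSet ∪ b.toSet)
  one := UM.ofSet ∅
  mul_assoc a b c := Set.union_assoc _ _ _
  one_mul := Set.empty_union
  mul_one := Set.union_empty

@[simp] lemma UM.toSet_mul {V : Type u} (a b : UM V) :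
    (a * b).toSet = a.toSet ∪ b.toSet := rfl

@[simp] lemma UM.toSet_one {V : Type u} : (1 : UM V).toSet = (∅ : Set V) := rfl

/-- The nerve of the one-object category on the union monoid: the ambient
simplicial set whose `n`-simplices are `n`-tuples of subsets of `V` (recorded
as a composable sequence of arrows). -/
def B (V : Type u) : SSet.{u} := nerve (SingleObj (UM V))

/-- The total subset (the "union of the entries") of a simplex of `B V`:
the value of the corresponding functor on the morphism `0 ⟶ last`. -/
def totM {V : Type u} {Δ : SimplexCategoryᵒᵖ} (x : (B V).obj Δ) : UM V :=
  x.map (homOfLE (Fin.zero_le (Fin.last Δ.unop.len)))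

/-- The total subset of a simplex of `B V`, as a set. -/
def tot {V : Type u} {Δ : SimplexCategoryᵒᵖ} (x : (B V).obj Δ) : Set V :=
  (totM x).toSet

lemma tot_whisker_subset {V : Type u} {m n : ℕ} (g : Fin (m + 1) ⥤ Fin (n + 1))
    (x : ComposableArrows (SingleObj (UM V)) n) :
    UM.toSet ((x.whiskerLeft g).map (homOfLE (Fin.zero_le (Fin.last m))))
      ⊆ UM.toSet (x.map (homOfLE (Fin.zero_le (Fin.last n)))) := by
  intro a ha
  have comp_eq : homOfLE (Fin.zero_le (Fin.last n))
      = homOfLE (Fin.zero_le (g.obj 0)) ≫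
          (g.map (homOfLE (Fin.zero_le (Fin.last m))) ≫
            homOfLE (Fin.le_last (g.obj (Fin.last m)))) :=
    Subsingleton.elim _ _
  have e : x.map (homOfLE (Fin.zero_le (Fin.last n)))
      = x.map (homOfLE (Fin.zero_le (g.obj 0))) ≫
          (x.map (g.map (homOfLE (Fin.zero_le (Fin.last m)))) ≫
            x.map (homOfLE (Fin.le_last (g.obj (Fin.last m))))) := by
    rw [comp_eq, x.map_comp, x.map_comp]
  have ha' : a ∈ UM.toSet (x.map (g.map (homOfLE (Fin.zero_le (Fin.last m))))) := ha
  rw [e, SingleObj.comp_as_mul, SingleObj.comp_as_mul, UM.toSet_mul, UM.toSet_mul]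
  exact Or.inl (Or.inr ha')

lemma tot_map_subset {V : Type u} {Δ Δ' : SimplexCategoryᵒᵖ} (θ : Δ ⟶ Δ')
    (x : (B V).obj Δ) : tot ((B V).map θ x) ⊆ tot x :=
  tot_whisker_subset (SimplexCategory.toCat.map θ.unop).toFunctor x

/-- The nerve space `N K` of a simplicial complex `K`: the simplicial subset
of `B V` consisting of the tuples of subsets whose union is empty or a
simplex of `K`.  (Each entry is then automatically empty or a simplex.) -/
def NC {V : Type u} (K : SComplex V) : SSet.{u} where
  obj Δ := {x : (B V).obj Δ // tot x = ∅ ∨ tot x ∈ K.faces}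
  map θ := TypeCat.ofHom fun x => ⟨(B V).map θ x.1, by
    rcases x.2 with h | h
    · left
      have hsub := tot_map_subset θ x.1
      rw [h] at hsub
      exact Set.subset_empty_iff.mp hsub
    · by_cases h0 : tot ((B V).map θ x.1) = ∅
      · exact Or.inl h0
      · exact Or.inr (K.down_closed h (tot_map_subset θ x.1)
          (Set.nonempty_iff_ne_empty.mpr h0))⟩
  map_id Δ := by
    ext x
    exact congrArg (fun m => m x.1) ((B V).map_id Δ)
  map_comp θ θ' := by
    ext x
    exact congrArg (fun m => m x.1) ((B V).map_comp θ θ')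

/-- The map of ambient simplicial sets induced by a monoid homomorphism of
union monoids. -/
def inducedB {V W : Type u} (h : UM V →* UM W) : B V ⟶ B W where
  app Δ := TypeCat.ofHom fun x => x ⋙ (SingleObj.mapHom (UM V) (UM W)) h
  naturality Δ Δ' θ := rfl

lemma totM_inducedB {V W : Type u} (h : UM V →* UM W) {Δ : SimplexCategoryᵒᵖ}
    (x : (B V).obj Δ) : totM ((inducedB h).app Δ x) = h (totM x) := rfl

/-- The map of nerve spaces induced by a monoid homomorphism of union monoids
carrying faces to faces. -/
def inducedNC {V W : Type u} {Γ : SComplex V} {K : SComplex W} (h : UM V →* UM W)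
    (hh : ∀ σ : Set V, σ ∈ Γ.faces → (h (UM.ofSet σ)).toSet ∈ K.faces) :
    NC Γ ⟶ NC K where
  app Δ := TypeCat.ofHom fun x => ⟨(inducedB h).app Δ x.1, by
    rcases x.2 with h0 | hfc
    · left
      have h1 : totM x.1 = 1 := h0
      show (totM ((inducedB h).app Δ x.1)).toSet = ∅
      rw [totM_inducedB, h1, map_one]
      rfl
    · right
      exact hh (tot x.1) hfc⟩
  naturality Δ Δ' θ := by
    ext x
    exact Subtype.ext (congrArg (fun m => m x.1) ((inducedB h).naturality θ))

/-- The image monoid homomorphism of union monoids induced by a function. -/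
def imageHom {V W : Type u} (f : V → W) : UM V →* UM W where
  toFun a := UM.ofSet (f '' a.toSet)
  map_one' := congrArg UM.ofSet (Set.image_empty f)
  map_mul' a b := congrArg UM.ofSet (Set.image_union f a.toSet b.toSet)

/-- The map of nerve spaces `N f : N Γ → N K` induced by a simplicial complex
map `f : Γ → K`, applying `f` termwise (with `f(∅) = ∅`). -/
def NMap {V W : Type u} {Γ : SComplex V} {K : SComplex W} (f : Map Γ K) :
    NC Γ ⟶ NC K :=
  inducedNC (imageHom f.toFun) (fun _ hσ => f.map_faces hσ)

/-- The union monoid homomorphism induced by a simplicial relation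
`π : K' → ĤN K`. -/
def relHom {V' W : Type u} {K' : SComplex V'} {K : SComplex W}
    (π : Map K' (nerveC K)) : UM V' →* UM W where
  toFun a := UM.ofSet (⋃ x ∈ a.toSet, ((π.toFun x : K.Face) : Set W))
  map_one' := congrArg UM.ofSet (by simp [UM.toSet, UM.ofSet])
  map_mul' a b := congrArg UM.ofSet (Set.biUnion_union a.toSet b.toSet _)

/-- The map of nerve spaces `T(π) : N K' → N K` induced by a simplicial
relation `π : K' → ĤN K`, applying `σ ↦ π̄(σ)` termwise. -/
def Tmap {V' W : Type u} {K' : SComplex V'} {K : SComplex W}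
    (π : Map K' (nerveC K)) : NC K' ⟶ NC K :=
  inducedNC (relHom π) (fun σ hσ => by
    have h2 := (π.map_faces hσ).2.2
    rwa [Set.biUnion_image] at h2)

/-! ### Distributions on simplicial sets -/

/-- The distribution functor on the category of types. -/
noncomputable def DistF (R : Type u) [CommSemiring R] : Type u ⥤ Type u where
  obj U := Dist R U
  map g := TypeCat.ofHom fun p => Dist.map g p
  map_id U := by
    ext p
    exact Subtype.ext Finsupp.mapDomain_id
  map_comp g g' := by
    apply ConcreteCategory.hom_ext
    intro p
    exact Subtype.ext (Finsupp.mapDomain_comp (v := p.1) (f := g) (g := g'))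

/-- The Dirac natural transformation `δ_X : X → D_R X`. -/
noncomputable def diracN (R : Type u) [CommSemiring R] (X : SSet.{u}) :
    X ⟶ X ⋙ DistF R where
  app Δ := TypeCat.ofHom fun x => Dist.pure x
  naturality Δ Δ' θ := by
    ext x
    exact Subtype.ext (Finsupp.mapDomain_single).symm

/-- A simplicial distribution on a simplicial set map `f : E → X`:
a simplicial set map `p : X → D_R E` with `D_R f ∘ p = δ_X`. -/
noncomputable def SDist (R : Type u) [CommSemiring R] {E X : SSet.{u}} (f : E ⟶ X) :
    Type u :=
  {p : X ⟶ E ⋙ DistF R // p ≫ Functor.whiskerRight f (DistF R) = diracN R X}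

/-- Sections of a simplicial set map. -/
def SSetSection {E X : SSet.{u}} (f : E ⟶ X) : Type u := {s : X ⟶ E // s ≫ f = 𝟙 X}

/-- Noncontextuality of a simplicial distribution: it is a mixture of the
deterministic distributions coming from sections, i.e. it is in the image of
`Θ : D_R(sections of f) → sDist(f)`. -/
noncomputable def SSetNC (R : Type u) [CommSemiring R] {E X : SSet.{u}} (f : E ⟶ X)
    (q : SDist R f) : Prop :=
  ∃ d : Dist R (SSetSection f), ∀ (Δ : SimplexCategoryᵒᵖ) (x : X.obj Δ),
    q.1.app Δ x = Dist.map (fun s : SSetSection f => s.1.app Δ x) d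

/-- The defining property of the simplicial distribution `N p` on `N f`
associated to an empirical model `p` on a bundle scenario `f`:
its value on an `n`-simplex `(σ₁,…,σₙ)` of `N K` at `(γ₁,…,γₙ)` is
`p_{σ₁∪⋯∪σₙ}(γ₁∪⋯∪γₙ)` when `(N f)(γ⃗) = σ⃗` and the union is nonempty,
is `0` when `(N f)(γ⃗) ≠ σ⃗`, and is the Dirac distribution at the tuple of
empty sets when all the `σᵢ` are empty. -/
def NpSpec {V W : Type u} {Γ : SComplex V} {K : SComplex W} (f : Map Γ K)
    (R : Type u) [CommSemiring R] (p : EmpiricalModel R f)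
    (q : NC K ⟶ NC Γ ⋙ DistF R) : Prop :=
  (∀ (Δ : SimplexCategoryᵒᵖ) (x : (NC K).obj Δ) (y : (NC Γ).obj Δ),
      (NMap f).app Δ y = x →
      ∀ (hu : tot x.1 ∈ K.faces) (γ : f.fiber (tot x.1)),
        (γ : Set V) = tot y.1 → (q.app Δ x).1 y = (p.dist _ hu).1 γ) ∧
  (∀ (Δ : SimplexCategoryᵒᵖ) (x : (NC K).obj Δ) (y : (NC Γ).obj Δ),
      (NMap f).app Δ y ≠ x → (q.app Δ x).1 y = 0) ∧
  (∀ (Δ : SimplexCategoryᵒᵖ) (x : (NC K).obj Δ), tot x.1 = ∅ →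
      ∀ y : (NC Γ).obj Δ, tot y.1 = ∅ → q.app Δ x = Dist.pure y)

/-- The `i`-th edge of an `n`-simplex of a nerve space. -/
def edgeN {V : Type u} {K : SComplex V} {n : ℕ} (i : Fin n)
    (x : (NC K).obj (Opposite.op (SimplexCategory.mk n))) :
    (NC K).obj (Opposite.op (SimplexCategory.mk 1)) :=
  (NC K).map (SimplexCategory.mkOfSucc i).op x

end Ctx

namespace Ctx
open CategoryTheory SComplex

section Statement18Aux
open CategoryTheory

variable {V V' W : Type u}

private lemma BV_ext {n : ℕ} {F G : ComposableArrows (SingleObj (UM V)) n}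
    (w : ∀ i : Fin n, F.map (homOfLE (Fin.castSucc_le_succ i))
      = G.map (homOfLE (Fin.castSucc_le_succ i))) : F = G := by
  refine ComposableArrows.ext (fun i => rfl) (fun i hi => ?_)
  simp only [eqToHom_refl, CategoryTheory.Category.comp_id, CategoryTheory.Category.id_comp]
  exact (congrArg F.map (Subsingleton.elim _ _)).trans
    ((w ⟨i, hi⟩).trans (congrArg G.map (Subsingleton.elim _ _)))

private lemma NC_ext {K : SComplex V} {n : ℕ}
    {x y : (NC K).obj (Opposite.op (SimplexCategory.mk n))}
    (w : ∀ i : Fin n, x.1.map (homOfLE (Fin.castSucc_le_succ i))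
      = y.1.map (homOfLE (Fin.castSucc_le_succ i))) : x = y :=
  Subtype.ext (BV_ext w)

/-- rewriting the map of a `B V`-simplex along subsingleton homs -/
private lemma mapUM {n : ℕ} (F : ComposableArrows (SingleObj (UM V)) n)
    {i j i' j' : Fin (n + 1)} (ff : i ⟶ j) (h : i' ≤ j') (e1 : i = i') (e2 : j = j') :
    F.map ff = F.map (homOfLE h) := by
  subst e1; subst e2; exact congrArg F.map (Subsingleton.elim _ _)

private def one1 (K : SComplex V) (σ : Set V) (h : σ = ∅ ∨ σ ∈ K.faces) :
    (NC K).obj (Opposite.op (SimplexCategory.mk 1)) :=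
  ⟨ComposableArrows.mk₁ (show SingleObj.star (UM V) ⟶ SingleObj.star (UM V) from
    UM.ofSet σ), h⟩

private lemma tot_one1 (K : SComplex V) (σ : Set V) (h : σ = ∅ ∨ σ ∈ K.faces) :
    tot (one1 K σ h).1 = σ := rfl

private lemma one1_tot {K : SComplex V} (y : (NC K).obj (Opposite.op (SimplexCategory.mk 1))) :
    one1 K (tot y.1) y.2 = y := by
  refine NC_ext (fun i => ?_)
  have h0 : i = 0 := Subsingleton.elim i 0
  subst h0
  exact (congrArg y.1.map (Subsingleton.elim _ _)).symm

private def twoS (K : SComplex V) (σ₁ σ₂ : Set V) (h : σ₂ ∪ σ₁ ∈ K.faces) :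
    (NC K).obj (Opposite.op (SimplexCategory.mk 2)) :=
  ⟨ComposableArrows.mk₂ (show SingleObj.star (UM V) ⟶ SingleObj.star (UM V) from UM.ofSet σ₁)
    (show SingleObj.star (UM V) ⟶ SingleObj.star (UM V) from UM.ofSet σ₂), Or.inr h⟩

private def th01 : SimplexCategory.mk 1 ⟶ SimplexCategory.mk 2 :=
  SimplexCategory.mkHom ⟨![0, 1], by decide⟩

private def th02 : SimplexCategory.mk 1 ⟶ SimplexCategory.mk 2 :=
  SimplexCategory.mkHom ⟨![0, 2], by decide⟩

private lemma map_th01 {K : SComplex V} (σ₁ σ₂ : Set V) (h : σ₂ ∪ σ₁ ∈ K.faces)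
    (h1 : σ₁ = ∅ ∨ σ₁ ∈ K.faces) :
    (NC K).map th01.op (twoS K σ₁ σ₂ h) = one1 K σ₁ h1 := by
  refine NC_ext (fun i => ?_)
  have h0 : i = 0 := Subsingleton.elim i 0
  subst h0
  rfl

private lemma map_th02 {K : SComplex V} (σ₁ σ₂ : Set V) (h : σ₂ ∪ σ₁ ∈ K.faces) :
    (NC K).map th02.op (twoS K σ₁ σ₂ h) = one1 K (σ₂ ∪ σ₁) (Or.inr h) := by
  refine NC_ext (fun i => ?_)
  have h0 : i = 0 := Subsingleton.elim i 0
  subst h0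
  rfl

private lemma edge_tot {K : SComplex V} {n : ℕ}
    (x : (NC K).obj (Opposite.op (SimplexCategory.mk n))) (i : Fin n) :
    tot ((NC K).map (SimplexCategory.mkOfSucc i).op x).1
      = UM.toSet (x.1.map (homOfLE (Fin.castSucc_le_succ i))) :=
  congrArg UM.toSet (mapUM x.1 _ (Fin.castSucc_le_succ i) rfl rfl)

variable {Γ : SComplex V} {Γ' : SComplex V'} {K : SComplex W}

private def Aset (αt : NC Γ ⟶ NC Γ') (σ : Set V) (h : σ = ∅ ∨ σ ∈ Γ.faces) : Set V' :=
  tot ((αt.app (Opposite.op (SimplexCategory.mk 1)) (one1 Γ σ h)).1)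

private lemma Aset_or (αt : NC Γ ⟶ NC Γ') (σ : Set V) (h : σ = ∅ ∨ σ ∈ Γ.faces) :
    Aset αt σ h = ∅ ∨ Aset αt σ h ∈ Γ'.faces :=
  (αt.app _ (one1 Γ σ h)).2

private lemma g_Aset (f : Map Γ K) (g : Map Γ' K) (αt : NC Γ ⟶ NC Γ')
    (hcomm : αt ≫ NMap g = NMap f) (σ : Set V) (h : σ = ∅ ∨ σ ∈ Γ.faces) :
    g.toFun '' Aset αt σ h = f.toFun '' σ := by
  have := congrArg (fun (φ : NC Γ ⟶ NC K) =>
    tot ((φ.app (Opposite.op (SimplexCategory.mk 1)) (one1 Γ σ h)).1)) hcomm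
  exact this

private lemma Aset_union (αt : NC Γ ⟶ NC Γ') (σ₁ σ₂ : Set V) (h : σ₂ ∪ σ₁ ∈ Γ.faces)
    (h1 : σ₁ = ∅ ∨ σ₁ ∈ Γ.faces) :
    Aset αt σ₁ h1 ⊆ Aset αt (σ₂ ∪ σ₁) (Or.inr h) := by
  set t := twoS Γ σ₁ σ₂ h with ht
  have n1 : αt.app _ ((NC Γ).map th01.op t) = (NC Γ').map th01.op (αt.app _ t) :=
    congrArg (fun m => m t) (αt.naturality th01.op)
  have n2 : αt.app _ ((NC Γ).map th02.op t) = (NC Γ').map th02.op (αt.app _ t) :=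
    congrArg (fun m => m t) (αt.naturality th02.op)
  rw [map_th01 σ₁ σ₂ h h1] at n1
  rw [map_th02 σ₁ σ₂ h] at n2
  have e1 : Aset αt σ₁ h1 = UM.toSet ((αt.app _ t).1.map
      (homOfLE (show (0 : Fin 3) ≤ 1 by decide))) := by
    show tot _ = _
    rw [n1]
    exact congrArg UM.toSet (mapUM (αt.app _ t).1 _ _ rfl rfl)
  have e2 : Aset αt (σ₂ ∪ σ₁) (Or.inr h) = UM.toSet ((αt.app _ t).1.map
      (homOfLE (show (0 : Fin 3) ≤ 2 by decide))) := by
    show tot _ = _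
    rw [n2]
    exact congrArg UM.toSet (mapUM (αt.app _ t).1 _ _ rfl rfl)
  rw [e1, e2]
  have e3 : (αt.app _ t).1.map (homOfLE (show (0 : Fin 3) ≤ 2 by decide))
      = (αt.app _ t).1.map (homOfLE (show (0 : Fin 3) ≤ 1 by decide))
        ≫ (αt.app _ t).1.map (homOfLE (show (1 : Fin 3) ≤ 2 by decide)) := by
    refine Eq.trans ?_ (Functor.map_comp _ _ _)
    exact congrArg (αt.app _ t).1.map (Subsingleton.elim _ _)
  rw [e3, SingleObj.comp_as_mul]
  intro a ha
  exact Or.inr ha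

private lemma Aset_congr (αt : NC Γ ⟶ NC Γ') {σ₁ σ₂ : Set V} (h1 : σ₁ = ∅ ∨ σ₁ ∈ Γ.faces)
    (h2 : σ₂ = ∅ ∨ σ₂ ∈ Γ.faces) (e : σ₁ = σ₂) : Aset αt σ₁ h1 = Aset αt σ₂ h2 := by
  subst e; rfl

private lemma Aset_mono (αt : NC Γ ⟶ NC Γ') {σ σ' : Set V} (h : σ = ∅ ∨ σ ∈ Γ.faces)
    (h' : σ' ∈ Γ.faces) (hsub : σ ⊆ σ') :
    Aset αt σ h ⊆ Aset αt σ' (Or.inr h') := by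
  have hu : σ' ∪ σ ∈ Γ.faces := by
    rwa [Set.union_eq_self_of_subset_right hsub]
  refine (Aset_union αt σ σ' hu h).trans ?_
  rw [Aset_congr αt (Or.inr hu) (Or.inr h') (Set.union_eq_self_of_subset_right hsub)]

end Statement18Aux

/-- a simplicial set map between nerve spaces of bundle
scenarios over the base comes from a unique simplicial complex map over the
base. -/
theorem statement_18 {V V' W : Type u} {Γ : SComplex V} {Γ' : SComplex V'}
    {K : SComplex W} (f : Map Γ K) (g : Map Γ' K)
    (hf : f.IsBundle) (hg : g.IsBundle)
    (αt : NC Γ ⟶ NC Γ') (hcomm : αt ≫ NMap g = NMap f) :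
    ∃! α : Map Γ Γ', g.comp α = f ∧ NMap α = αt := by
  classical
  have hGA : ∀ σ (h : σ = ∅ ∨ σ ∈ Γ.faces),
      g.toFun '' Aset αt σ h = f.toFun '' σ := g_Aset f g αt hcomm
  have hAface : ∀ σ (hσ : σ ∈ Γ.faces), Aset αt σ (Or.inr hσ) ∈ Γ'.faces := by
    intro σ hσ
    rcases Aset_or αt σ (Or.inr hσ) with h | h
    · exfalso
      have h2 := hGA σ (Or.inr hσ)
      rw [h, Set.image_empty] at h2
      obtain ⟨x, hx⟩ := Γ.nonempty_mem σ hσ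
      exact absurd (h2.symm ▸ Set.mem_image_of_mem f.toFun hx) (Set.notMem_empty _)
    · exact h
  have hAe : ∀ (h : (∅ : Set V) = ∅ ∨ (∅ : Set V) ∈ Γ.faces), Aset αt ∅ h = ∅ := by
    intro h
    have h2 := hGA ∅ h
    rw [Set.image_empty] at h2
    exact Set.image_eq_empty.mp h2
  -- vertex images
  have hsing : ∀ x : V, ∃ y : V', Aset αt {x} (Or.inr (Γ.singleton_mem x)) = {y} := by
    intro x
    have hface := hAface {x} (Γ.singleton_mem x)
    have himg := hGA {x} (Or.inr (Γ.singleton_mem x))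
    rw [Set.image_singleton] at himg
    obtain ⟨y, hy⟩ := Γ'.nonempty_mem _ hface
    refine ⟨y, Set.eq_singleton_iff_unique_mem.mpr ⟨hy, ?_⟩⟩
    intro y' hy'
    by_contra hne
    have hgy : g.toFun y = f.toFun x := by
      have : g.toFun y ∈ ({f.toFun x} : Set W) := himg ▸ Set.mem_image_of_mem g.toFun hy
      simpa using this
    have hgy' : g.toFun y' = f.toFun x := by
      have : g.toFun y' ∈ ({f.toFun x} : Set W) := himg ▸ Set.mem_image_of_mem g.toFun hy'
      simpa using this
    refine hg.2.2 y' y hne (hgy'.trans hgy.symm)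
      (Γ'.down_closed hface ?_ ⟨y', by simp⟩)
    intro z hz
    rcases hz with rfl | hz
    · exact hy'
    · rcases hz with rfl; exact hy
  choose αfun hαfun using hsing
  have hgα : ∀ x : V, g.toFun (αfun x) = f.toFun x := by
    intro x
    have himg := hGA {x} (Or.inr (Γ.singleton_mem x))
    rw [hαfun x, Set.image_singleton, Set.image_singleton] at himg
    exact Set.singleton_eq_singleton_iff.mp himg
  have hmem : ∀ σ (hσ : σ ∈ Γ.faces) (x : V), x ∈ σ → αfun x ∈ Aset αt σ (Or.inr hσ) := by
    intro σ hσ x hx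
    refine Aset_mono αt (Or.inr (Γ.singleton_mem x)) hσ (by simpa using hx) ?_
    rw [hαfun x]; exact rfl
  have key : ∀ σ (hσ : σ ∈ Γ.faces), Aset αt σ (Or.inr hσ) = αfun '' σ := by
    intro σ hσ
    apply Set.Subset.antisymm
    · intro y hy
      have hgimg : g.toFun y ∈ f.toFun '' σ := by
        rw [← hGA σ (Or.inr hσ)]; exact Set.mem_image_of_mem g.toFun hy
      obtain ⟨x, hx, hgx⟩ := hgimg
      by_cases hyx : y = αfun x
      · exact hyx ▸ Set.mem_image_of_mem αfun hx
      · exfalso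
        refine hg.2.2 y (αfun x) hyx (hgx.symm.trans (hgα x).symm)
          (Γ'.down_closed (hAface σ hσ) ?_ ⟨y, by simp⟩)
        intro z hz
        rcases hz with rfl | hz
        · exact hy
        · rcases hz with rfl; exact hmem σ hσ x hx
    · rintro _ ⟨x, hx, rfl⟩
      exact hmem σ hσ x hx
  -- the simplicial complex map
  refine ⟨⟨αfun, fun σ hσ => (key σ hσ) ▸ hAface σ hσ⟩, ⟨?_, ?_⟩, ?_⟩
  · -- g ∘ α = f
    apply Map.ext
    funext x
    exact hgα x
  · -- N α = αt
    refine NatTrans.ext (funext fun Δ => ConcreteCategory.hom_ext _ _ fun x => ?_)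
    refine NC_ext (n := Δ.unop.len) (fun i => ?_)
    set y := (NC Γ).map (SimplexCategory.mkOfSucc i).op x with hy
    have hnat : αt.app _ y = (NC Γ').map (SimplexCategory.mkOfSucc i).op (αt.app Δ x) :=
      congrArg (fun m => m x) (αt.naturality (SimplexCategory.mkOfSucc i).op)
    have e1 : UM.toSet ((αt.app Δ x).1.map (homOfLE (Fin.castSucc_le_succ i)))
        = Aset αt (tot y.1) y.2 := by
      rw [← edge_tot (n := Δ.unop.len) (αt.app Δ x) i, ← hnat]
      show _ = tot (αt.app _ (one1 Γ (tot y.1) y.2)).1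
      rw [one1_tot y]
    have e2 : UM.toSet (x.1.map (homOfLE (Fin.castSucc_le_succ i))) = tot y.1 :=
      (edge_tot (n := Δ.unop.len) x i).symm
    have goal' : (αfun '' UM.toSet (x.1.map (homOfLE (Fin.castSucc_le_succ i))) : Set V')
        = UM.toSet ((αt.app Δ x).1.map (homOfLE (Fin.castSucc_le_succ i))) := by
      rw [e1, e2]
      rcases y.2 with h | h
      · rw [Aset_congr αt y.2 (Or.inl rfl) h, hAe, h, Set.image_empty]
      · exact (key (tot y.1) h).symm
    exact goal'
  · -- uniqueness
    rintro β ⟨hgβ, hβt⟩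
    apply Map.ext
    funext x
    have h1 : (NMap β).app _ (one1 Γ {x} (Or.inr (Γ.singleton_mem x)))
        = αt.app _ (one1 Γ {x} (Or.inr (Γ.singleton_mem x))) := by rw [hβt]
    have h2 : (β.toFun '' {x} : Set V') = Aset αt {x} (Or.inr (Γ.singleton_mem x)) :=
      congrArg (fun z => tot (Subtype.val z)) h1
    rw [Set.image_singleton, hαfun x] at h2
    exact Set.singleton_eq_singleton_iff.mp h2

end Ctx
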